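/- Let σ(x) = 1/(1+e^{-x}) be the sigmoid function, and let α, γ, s > 0 and β ∈ ℝ. Then there exists a unique y ∈ ℝ solving α·σ(y) = β + γ·σ(-y/s) if and only if β < α and β + γ > 0. Moreover, when a solution exists, y > 0 if and only if β + γ/2 > α/2. -/

import Mathlib

noncomputable def sigmoid (x : ℝ) : ℝ := (1 + Real.exp (-x))⁻¹

lemma sigmoid_pos (x : ℝ) : 0 < sigmoid x := by
  unfold sigmoid; positivity

lemma sigmoid_lt_one (x : ℝ) : sigmoid x < 1 := by
  unfold sigmoid
  rw [inv_lt_one_iff₀]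
  right
  linarith [Real.exp_pos (-x)]

lemma sigmoid_strictMono : StrictMono sigmoid := by
  intro a b hab
  unfold sigmoid
  apply inv_strictAnti₀ (by positivity)
  have := Real.exp_lt_exp.2 (neg_lt_neg hab)
  linarith

lemma sigmoid_continuous : Continuous sigmoid := by
  apply Continuous.inv₀
  · fun_prop
  · intro x
    positivity

lemma sigmoid_zero : sigmoid 0 = 1 / 2 := by
  unfold sigmoid; norm_num

lemma sigmoid_tendsto_atTop : Filter.Tendsto sigmoid Filter.atTop (nhds 1) := by
  have h : Filter.Tendsto (fun x : ℝ => 1 + Real.exp (-x)) Filter.atTop (nhds 1) := by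
    have := Real.tendsto_exp_atBot.comp Filter.tendsto_neg_atTop_atBot
    simpa using tendsto_const_nhds.add this
  exact (by simpa using (h.inv₀ (by norm_num)) : Filter.Tendsto (fun x : ℝ => (1 + Real.exp (-x))⁻¹) Filter.atTop (nhds 1))

lemma sigmoid_tendsto_atBot : Filter.Tendsto sigmoid Filter.atBot (nhds 0) := by
  have h : Filter.Tendsto (fun x : ℝ => 1 + Real.exp (-x)) Filter.atBot Filter.atTop := by
    have := Real.tendsto_exp_atTop.comp Filter.tendsto_neg_atBot_atTop
    exact Filter.tendsto_atTop_add_const_left _ 1 this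
  exact h.inv_tendsto_atTop

theorem stmt_0 (α β γ s : ℝ) (hα : 0 < α) (hγ : 0 < γ) (hs : 0 < s) :
    ((∃! y : ℝ, α * sigmoid y = β + γ * sigmoid (-y / s)) ↔ (β < α ∧ 0 < β + γ)) ∧
    (∀ y : ℝ, α * sigmoid y = β + γ * sigmoid (-y / s) →
      (0 < y ↔ α / 2 < β + γ / 2)) := by
  set f : ℝ → ℝ := fun y => α * sigmoid y - γ * sigmoid (-y / s) with hf
  have hmono : StrictMono f := by
    intro a b hab
    have h1 : sigmoid a < sigmoid b := sigmoid_strictMono hab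
    have h2 : sigmoid (-b / s) < sigmoid (-a / s) := by
      apply sigmoid_strictMono
      apply div_lt_div_of_pos_right (by linarith) hs
    simp only [hf]
    nlinarith
  have hcont : Continuous f :=
    (continuous_const.mul sigmoid_continuous).sub
      (continuous_const.mul (sigmoid_continuous.comp (continuous_neg.div_const s)))
  have heq : ∀ y, (α * sigmoid y = β + γ * sigmoid (-y / s)) ↔ f y = β := by
    intro y; simp only [hf]; constructor <;> intro h <;> linarith
  have hf0 : f 0 = α / 2 - γ / 2 := by
    simp [hf, sigmoid_zero]; ring
  constructor
  · constructor
    · rintro ⟨y, hy, -⟩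
      rw [heq] at hy
      have h1 := sigmoid_pos y
      have h2 := sigmoid_lt_one y
      have h3 := sigmoid_pos (-y / s)
      have h4 := sigmoid_lt_one (-y / s)
      constructor <;> simp only [hf] at hy <;> nlinarith
    · rintro ⟨hβα, hβγ⟩
      -- limits of f
      have htop : Filter.Tendsto f Filter.atTop (nhds α) := by
        have h1 : Filter.Tendsto (fun y : ℝ => α * sigmoid y) Filter.atTop (nhds α) := by
          simpa using tendsto_const_nhds.mul sigmoid_tendsto_atTop
        have h2 : Filter.Tendsto (fun y : ℝ => γ * sigmoid (-y / s)) Filter.atTop (nhds 0) := by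
          have hneg : Filter.Tendsto (fun y : ℝ => -y / s) Filter.atTop Filter.atBot := by
            exact Filter.tendsto_neg_atTop_atBot.atBot_div_const hs
          simpa using tendsto_const_nhds.mul (sigmoid_tendsto_atBot.comp hneg)
        simpa using h1.sub h2
      have hbot : Filter.Tendsto f Filter.atBot (nhds (-γ)) := by
        have h1 : Filter.Tendsto (fun y : ℝ => α * sigmoid y) Filter.atBot (nhds 0) := by
          simpa using tendsto_const_nhds.mul sigmoid_tendsto_atBot
        have h2 : Filter.Tendsto (fun y : ℝ => γ * sigmoid (-y / s)) Filter.atBot (nhds γ) := by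
          have hneg : Filter.Tendsto (fun y : ℝ => -y / s) Filter.atBot Filter.atTop := by
            exact Filter.tendsto_neg_atBot_atTop.atTop_div_const hs
          simpa using tendsto_const_nhds.mul (sigmoid_tendsto_atTop.comp hneg)
        have := h1.sub h2
        simpa using this
      have hb : ∃ b, β < f b := by
        have := htop.eventually (eventually_gt_nhds hβα)
        exact (this.exists)
      have ha : ∃ a, f a < β := by
        have := hbot.eventually (eventually_lt_nhds (by linarith : -γ < β))
        exact (this.exists)
      obtain ⟨a, ha⟩ := ha
      obtain ⟨b, hb⟩ := hb
      have hab : a ≤ b := le_of_lt (hmono.lt_iff_lt.1 (by linarith))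
      have := intermediate_value_Icc hab hcont.continuousOn
      have hmem : β ∈ Set.Icc (f a) (f b) := ⟨le_of_lt ha, le_of_lt hb⟩
      obtain ⟨y, -, hy⟩ := this hmem
      refine ⟨y, (heq y).2 hy, fun z hz => hmono.injective ?_⟩
      rw [(heq z).1 hz, hy]
  · intro y hy
    rw [heq] at hy
    constructor
    · intro h
      have := hmono h
      rw [hf0, hy] at this
      linarith
    · intro h
      by_contra hne
      push_neg at hne
      have := hmono.monotone hne
      rw [hf0, hy] at this
      linarith
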